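/- Define g_ε(t,ξ) = cos(ω t)·I + (sin(ω t)/ω)·(ε·i·σ₁ + i·ξ·σ₃) with ω = √(ξ²+1), ε ∈ {+1,-1}. For fixed positive reals t₁,t₂,t₃,t₄, the function F(ξ) = (1/2)·Tr( g₁(t₁,ξ)·g₋₁(t₂,ξ)·g₁(t₃,ξ)·g₋₁(t₄,ξ) ) is an even function of ξ: F(-ξ) = F(ξ) for all real ξ. -/
import Mathlib


open Matrix

noncomputable def sigma1 : Matrix (Fin 2) (Fin 2) ℂ := !![0, 1; 1, 0]
noncomputable def sigma3 : Matrix (Fin 2) (Fin 2) ℂ := !![1, 0; 0, -1]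

/-- `g ε t ξ = cos(ωt)·I + (sin(ωt)/ω)·(ε·i·σ₁ + i·ξ·σ₃)`, with `ω = √(ξ²+1)`. -/
noncomputable def gMat (ε t ξ : ℝ) : Matrix (Fin 2) (Fin 2) ℂ :=
  ((Real.cos (Real.sqrt (ξ ^ 2 + 1) * t) : ℂ)) • (1 : Matrix (Fin 2) (Fin 2) ℂ) +
    ((Real.sin (Real.sqrt (ξ ^ 2 + 1) * t) / Real.sqrt (ξ ^ 2 + 1) : ℝ) : ℂ) •
      (((ε : ℂ) * Complex.I) • sigma1 + (Complex.I * (ξ : ℂ)) • sigma3)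

/-- `F(ξ) = ½ Tr(g₁(t₁,ξ) g₋₁(t₂,ξ) g₁(t₃,ξ) g₋₁(t₄,ξ))`. -/
noncomputable def Ffun (t₁ t₂ t₃ t₄ ξ : ℝ) : ℂ :=
  (1 / 2) * (gMat 1 t₁ ξ * gMat (-1) t₂ ξ * gMat 1 t₃ ξ * gMat (-1) t₄ ξ).trace

lemma sigma1_sq : sigma1 * sigma1 = 1 := by
  ext i j
  fin_cases i <;> fin_cases j <;>
    simp [sigma1, Matrix.mul_apply, Fin.sum_univ_two, Matrix.one_apply]

lemma gMat_conj (ε t ξ : ℝ) : sigma1 * gMat ε t ξ * sigma1 = gMat ε t (-ξ) := by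
  ext i j
  fin_cases i <;> fin_cases j <;>
    · simp only [gMat, sigma1, sigma3, Matrix.mul_apply, Fin.sum_univ_two, Matrix.one_apply,
        neg_sq, Matrix.add_apply, Matrix.smul_apply, Matrix.cons_val_zero, Matrix.cons_val_one,
        Matrix.head_cons, Matrix.head_fin_const, smul_eq_mul, Matrix.cons_val', Matrix.empty_val',
        Matrix.cons_val_fin_one, Complex.ofReal_neg]
      norm_num
      try ring

set_option maxHeartbeats 1000000 in
lemma sconj_mul (A B : Matrix (Fin 2) (Fin 2) ℂ) :
    (sigma1 * A * sigma1) * (sigma1 * B * sigma1) = sigma1 * (A * B) * sigma1 := by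
  have : sigma1 * A * sigma1 * (sigma1 * B * sigma1)
      = sigma1 * A * (sigma1 * sigma1) * B * sigma1 := by
    simp only [Matrix.mul_assoc]
  rw [this, sigma1_sq, Matrix.mul_one, Matrix.mul_assoc sigma1 A B]

set_option maxHeartbeats 1000000 in
theorem stmt_4 (t₁ t₂ t₃ t₄ : ℝ) (h₁ : 0 < t₁) (h₂ : 0 < t₂) (h₃ : 0 < t₃) (h₄ : 0 < t₄)
    (ξ : ℝ) : Ffun t₁ t₂ t₃ t₄ (-ξ) = Ffun t₁ t₂ t₃ t₄ ξ := by
  unfold Ffun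
  refine congrArg (fun z => (1 / 2 : ℂ) * z) ?_
  conv_lhs => rw [← gMat_conj 1 t₁ ξ, ← gMat_conj (-1) t₂ ξ, ← gMat_conj 1 t₃ ξ, ← gMat_conj (-1) t₄ ξ,
    sconj_mul, sconj_mul, sconj_mul, Matrix.trace_mul_cycle, ← Matrix.mul_assoc, sigma1_sq,
    Matrix.one_mul]
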